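/- With the notation of the matroid MI_n: each set Cᵢ (i = 1, 2, 3) is a circuit of MI_n, i.e., Cᵢ is dependent and every proper subset of Cᵢ is independent. -/
import Mathlib


open Finset

/-- The ground set `E_n = {1,2,3,4} ∪ X ∪ Y ∪ Z`: the four special points are `Sum.inl 0, …,
Sum.inl 3` (standing for `1,2,3,4`), and `Sum.inr (k, j)` is the `j`-th element of `X`, `Y`, `Z`
for `k = 0, 1, 2` respectively. -/
abbrev MIElt (n : ℕ) := Fin 4 ⊕ (Fin 3 × Fin (n + 1))

/-- `MIXYZ n 0 = X`, `MIXYZ n 1 = Y`, `MIXYZ n 2 = Z`. -/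
def MIXYZ (n : ℕ) (k : Fin 3) : Finset (MIElt n) :=
  (Finset.univ : Finset (Fin (n + 1))).image fun j => Sum.inr (k, j)

/-- `H₁ = {1} ∪ Y ∪ Z`, `H₂ = {2} ∪ X ∪ Z`, `H₃ = {3} ∪ X ∪ Y` (indices shifted to `0,1,2`). -/
def MIH (n : ℕ) (i : Fin 3) : Finset (MIElt n) :=
  insert (Sum.inl i.castSucc) (MIXYZ n (i + 1) ∪ MIXYZ n (i + 2))

/-- `C₁ = {1,4} ∪ X`, `C₂ = {2,4} ∪ Y`, `C₃ = {3,4} ∪ Z` (indices shifted to `0,1,2`). -/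
def MIC (n : ℕ) (i : Fin 3) : Finset (MIElt n) :=
  insert (Sum.inl i.castSucc) (insert (Sum.inl 3) (MIXYZ n i))

/-- The set `{1,2,3}` of special points. -/
def MIT (n : ℕ) : Finset (MIElt n) := {Sum.inl 0, Sum.inl 1, Sum.inl 2}

/-- The collection `B_n` of bases of the matroid `MI_n`. -/
def MIBases (n : ℕ) (B : Finset (MIElt n)) : Prop :=
  B.card = n + 3 ∧ ¬ MIT n ⊆ B ∧ ∀ i : Fin 3, ¬ B ⊆ MIC n i ∧ ¬ B ⊆ MIH n i

lemma mem_MIXYZ_inl {n : ℕ} {k : Fin 3} {a : Fin 4} : Sum.inl a ∉ MIXYZ n k := by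
  simp [MIXYZ]

lemma mem_MIXYZ_inr {n : ℕ} {k k' : Fin 3} {j : Fin (n+1)} :
    Sum.inr (k, j) ∈ MIXYZ n k' ↔ k' = k := by
  simp [MIXYZ]

lemma mem_MIC_inl {n : ℕ} {i : Fin 3} {a : Fin 4} :
    Sum.inl a ∈ MIC n i ↔ a = i.castSucc ∨ a = 3 := by
  simp [MIC, mem_MIXYZ_inl]

lemma mem_MIC_inr {n : ℕ} {i k : Fin 3} {j : Fin (n+1)} :
    Sum.inr (k, j) ∈ MIC n i ↔ i = k := by
  simp [MIC, mem_MIXYZ_inr]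

lemma mem_MIH_inl {n : ℕ} {i : Fin 3} {a : Fin 4} :
    Sum.inl a ∈ MIH n i ↔ a = i.castSucc := by
  simp [MIH, mem_MIXYZ_inl]

lemma mem_MIH_inr {n : ℕ} {i k : Fin 3} {j : Fin (n+1)} :
    Sum.inr (k, j) ∈ MIH n i ↔ i + 1 = k ∨ i + 2 = k := by
  simp [MIH, mem_MIXYZ_inr]

lemma castSucc_ne_three {i : Fin 3} : i.castSucc ≠ (3 : Fin 4) := by
  intro h
  have h2 := congrArg Fin.val h
  have := i.isLt
  simp at h2
  omega

lemma card_MIC (n : ℕ) (i : Fin 3) : (MIC n i).card = n + 3 := by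
  have hX : (MIXYZ n i).card = n + 1 := by
    rw [MIXYZ, Finset.card_image_of_injective _ (fun a b h => by simpa using h)]
    simp
  rw [MIC, card_insert_of_notMem (by simp [mem_MIXYZ_inl, castSucc_ne_three]),
    card_insert_of_notMem mem_MIXYZ_inl, hX]

/-- Each `Cᵢ` is a circuit of `MI_n`: it is contained in no basis, while each of its proper
subsets is contained in some basis. -/
theorem MI_C_is_circuit (n : ℕ) (i : Fin 3) :
    (¬ ∃ B, MIBases n B ∧ MIC n i ⊆ B) ∧
    (∀ S : Finset (MIElt n), S ⊂ MIC n i → ∃ B, MIBases n B ∧ S ⊆ B) := by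
  constructor
  · rintro ⟨B, hB, hCB⟩
    have hBC : B = MIC n i := by
      apply (Finset.eq_of_subset_of_card_le hCB (by rw [hB.1, card_MIC])).symm
    exact (hB.2.2 i).1 (hBC ▸ subset_rfl)
  · intro S hS
    obtain ⟨x, hxC, hxS⟩ := Finset.exists_of_ssubset hS
    set e : MIElt n := Sum.inr (i + 1, (0 : Fin (n+1))) with he_def
    have he : e ∉ MIC n i := by
      rw [he_def, mem_MIC_inr]
      exact (show ∀ i : Fin 3, i ≠ i + 1 by decide) i
    set B : Finset (MIElt n) := insert e ((MIC n i).erase x) with hB_def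
    have memB : ∀ a : MIElt n, a ∈ B ↔ a = e ∨ (a ≠ x ∧ a ∈ MIC n i) := by
      intro a; simp [hB_def, Finset.mem_insert, Finset.mem_erase]
    refine ⟨B, ⟨?_, ?_, fun j => ⟨?_, ?_⟩⟩, ?_⟩
    · -- card
      rw [hB_def, card_insert_of_notMem (fun h => he (Finset.mem_of_mem_erase h)),
        Finset.card_erase_of_mem hxC, card_MIC]
      omega
    · -- not MIT ⊆ B
      intro hT
      have h0 : Sum.inl 0 ∈ B := hT (by simp [MIT])
      have h1 : Sum.inl 1 ∈ B := hT (by simp [MIT])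
      rw [memB] at h0 h1
      rcases h0 with h0 | ⟨-, h0⟩
      · exact absurd h0 (by simp [he_def])
      rcases h1 with h1 | ⟨-, h1⟩
      · exact absurd h1 (by simp [he_def])
      rw [mem_MIC_inl] at h0 h1
      rcases h0 with h0 | h0
      · rcases h1 with h1 | h1
        · exact absurd (h0.trans h1.symm) (by decide)
        · exact absurd h1 (by decide)
      · exact absurd h0 (by decide)
    · -- not B ⊆ MIC j
      by_cases hji : j = i
      · subst hji
        exact fun h => he (h (by rw [memB]; exact Or.inl rfl))
      · by_cases hx : x = Sum.inl i.castSucc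
        · intro h
          have hw : Sum.inr (i, (0 : Fin (n+1))) ∈ B := by
            rw [memB]
            exact Or.inr ⟨by rw [hx]; simp, mem_MIC_inr.2 rfl⟩
          have := mem_MIC_inr.1 (h hw)
          exact hji this
        · intro h
          have hw : (Sum.inl i.castSucc : MIElt n) ∈ B := by
            rw [memB]
            exact Or.inr ⟨fun hh => hx hh.symm, mem_MIC_inl.2 (Or.inl rfl)⟩
          rcases mem_MIC_inl.1 (h hw) with hh | hh
          · exact hji (Fin.castSucc_injective _ hh).symm
          · exact castSucc_ne_three hh
    · -- not B ⊆ MIH j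
      by_cases hx3 : x = Sum.inl 3
      · rcases (show ∀ i j : Fin 3, j = i ∨ j = i + 1 ∨ j = i + 2 by decide) i j
          with hj | hj | hj
        · subst hj
          intro h
          have hw : Sum.inr (j, (0 : Fin (n+1))) ∈ B := by
            rw [memB]
            exact Or.inr ⟨by rw [hx3]; simp, mem_MIC_inr.2 rfl⟩
          rcases mem_MIH_inr.1 (h hw) with hh | hh
          · exact (show ∀ j : Fin 3, j + 1 ≠ j by decide) j hh
          · exact (show ∀ j : Fin 3, j + 2 ≠ j by decide) j hh
        · subst hj
          intro h
          have hw : e ∈ B := by rw [memB]; exact Or.inl rfl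
          rw [he_def] at hw
          rcases mem_MIH_inr.1 (h hw) with hh | hh
          · exact (show ∀ i : Fin 3, (i+1) + 1 ≠ i + 1 by decide) i hh
          · exact (show ∀ i : Fin 3, (i+1) + 2 ≠ i + 1 by decide) i hh
        · subst hj
          intro h
          have hw : (Sum.inl i.castSucc : MIElt n) ∈ B := by
            rw [memB]
            refine Or.inr ⟨fun hh => ?_, mem_MIC_inl.2 (Or.inl rfl)⟩
            rw [hx3] at hh
            exact castSucc_ne_three (Sum.inl.injEq _ _ ▸ hh)
          have hh := mem_MIH_inl.1 (h hw)
          exact (show ∀ i : Fin 3, i.castSucc ≠ (i+2).castSucc by decide) i hh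
      · intro h
        have hw : (Sum.inl 3 : MIElt n) ∈ B := by
          rw [memB]
          exact Or.inr ⟨fun hh => hx3 hh.symm, mem_MIC_inl.2 (Or.inr rfl)⟩
        have hh := mem_MIH_inl.1 (h hw)
        exact castSucc_ne_three hh.symm
    · -- S ⊆ B
      intro s hs
      rw [memB]
      exact Or.inr ⟨fun hh => hxS (hh ▸ hs), hS.subset hs⟩
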